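/- Fix s ∈ (0,1). For every integer l ≥ 2 and every integer n ≥ 0, l^{2s} · ∫₁^{π/2} θ^{-2s-1} (1 − |P_l(cos(θ/l))|) dθ ≤ λ_{3,B}(n,l) ≤ l^{2s} · ∫_{1/3}^{+∞} 2·θ^{-2s-1} dθ. -/

import Mathlib

open MeasureTheory Real

/-- The `l`-th Legendre polynomial via the Rodrigues formula. -/
noncomputable def legP (l : ℕ) (x : ℝ) : ℝ :=
  (1 / (2 ^ l * Nat.factorial l)) * iteratedDeriv l (fun y : ℝ => (y ^ 2 - 1) ^ l) x

/-- The term `λ_{3,B}(n,l)` in the splitting of the Boltzmann eigenvalues. -/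
noncomputable def lam3B (s : ℝ) (n l : ℕ) : ℝ :=
  ∫ θ in (1 / ((l : ℝ) + 2))..(Real.pi / 4),
    θ ^ (-2 * s - 1) * (1 - legP l (Real.cos θ) * (Real.cos θ) ^ (2 * n + l))

section PolyAux
open Polynomial

private lemma iterDeriv_polyEval (p : ℝ[X]) (n : ℕ) :
    iteratedDeriv n (fun y : ℝ => p.eval y) = fun x => (derivative^[n] p).eval x := by
  induction n generalizing p with
  | zero => simp
  | succ n ih =>
    rw [iteratedDeriv_succ']
    have h : (deriv fun y : ℝ => p.eval y) = fun y => (derivative p).eval y := by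
      funext y; exact Polynomial.deriv p
    rw [h, ih, Function.iterate_succ_apply]

private lemma legP_eq_eval (l : ℕ) (x : ℝ) :
    legP l x = (1 / (2 ^ l * (Nat.factorial l : ℝ))) *
      (derivative^[l] ((X ^ 2 - 1 : ℝ[X]) ^ l)).eval x := by
  unfold legP
  congr 1
  have h : (fun y : ℝ => (y ^ 2 - 1) ^ l) = fun y : ℝ => ((X ^ 2 - 1 : ℝ[X]) ^ l).eval y := by
    funext y; simp
  rw [h, iterDeriv_polyEval]

private lemma iter_deriv_C_mul (a : ℝ) (p : ℝ[X]) (n : ℕ) :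
    derivative^[n] (C a * p) = C a * derivative^[n] p := by
  induction n with
  | zero => rfl
  | succ n ih => rw [Function.iterate_succ_apply', ih, derivative_C_mul, Function.iterate_succ_apply']

private lemma eval_one_iter (l : ℕ) :
    (derivative^[l] ((X ^ 2 - 1 : ℝ[X]) ^ l)).eval 1 = 2 ^ l * Nat.factorial l := by
  have hq : ((X ^ 2 - 1 : ℝ[X]) ^ l) = (X - C 1) ^ l * (X + C 1) ^ l := by
    rw [← mul_pow, C_1]; ring_nf
  rw [hq, Polynomial.iterate_derivative_mul, Polynomial.eval_finset_sum,
    Finset.sum_eq_single 0]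
  · simp only [Nat.sub_zero, Polynomial.iterate_derivative_X_sub_pow, Nat.choose_zero_right,
      Function.iterate_zero_apply, one_smul, Nat.sub_self, pow_zero, smul_mul_assoc, one_mul]
    simp [Nat.descFactorial_self, mul_comm]
    norm_num
  · intro k hk hk0
    rw [Polynomial.iterate_derivative_X_sub_pow]
    have hkl : k ≤ l := by simpa using Nat.lt_succ_iff.mp (Finset.mem_range.mp hk)
    have : l - (l - k) = k := by omega
    simp [this, zero_pow hk0]
  · intro h; simp at h

private lemma iterA (m : ℕ) (r : ℝ[X]) :
    derivative^[m + 1] (X * r) =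
      X * derivative^[m + 1] r + ((m : ℝ[X]) + 1) * derivative^[m] r := by
  induction m with
  | zero => simp [derivative_mul]; ring
  | succ m ih =>
    rw [Function.iterate_succ_apply' derivative (m + 1), ih]
    simp only [derivative_add, derivative_mul, derivative_X, derivative_one,
      derivative_natCast, Function.iterate_succ_apply' derivative (m + 1),
      Function.iterate_succ_apply' derivative m]
    push_cast
    try simp only [map_ofNat, C_1]
    ring

private lemma iterB (m : ℕ) (r : ℝ[X]) :
    derivative^[m + 2] ((X ^ 2 - 1) * r) =
      (X ^ 2 - 1) * derivative^[m + 2] r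
        + (2 * ((m : ℝ[X]) + 2)) * (X * derivative^[m + 1] r)
        + (((m : ℝ[X]) + 2) * ((m : ℝ[X]) + 1)) * derivative^[m] r := by
  induction m with
  | zero =>
    show derivative (derivative ((X ^ 2 - 1) * r)) = _
    simp only [derivative_mul, derivative_sub, derivative_one, derivative_pow, derivative_X,
      derivative_add, derivative_zero, derivative_C, derivative_ofNat, map_ofNat, C_1, Function.iterate_succ_apply', Function.iterate_zero_apply]
    push_cast
    try simp only [map_ofNat, C_1]
    ring
  | succ m ih =>
    rw [Function.iterate_succ_apply' derivative (m + 2), ih]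
    simp only [derivative_add, derivative_mul, derivative_sub, derivative_one, derivative_pow,
      derivative_X, derivative_natCast, derivative_zero, derivative_C, derivative_ofNat, map_ofNat, C_1, Function.iterate_succ_apply' derivative (m + 2),
      Function.iterate_succ_apply' derivative (m + 1), Function.iterate_succ_apply' derivative m]
    push_cast
    try simp only [map_ofNat, C_1]
    ring

private lemma legP_ODE {l : ℕ} (hl : 1 ≤ l) (x : ℝ) :
    (1 - x ^ 2) * (derivative (derivative (derivative^[l] ((X ^ 2 - 1 : ℝ[X]) ^ l)))).eval x
      - 2 * x * (derivative (derivative^[l] ((X ^ 2 - 1 : ℝ[X]) ^ l))).eval x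
      + ((l : ℝ) * ((l : ℝ) + 1)) * (derivative^[l] ((X ^ 2 - 1 : ℝ[X]) ^ l)).eval x = 0 := by
  obtain ⟨k, rfl⟩ : ∃ k, l = k + 1 := ⟨l - 1, by omega⟩
  set q : ℝ[X] := (X ^ 2 - 1) ^ (k + 1) with hq
  have h1 : (X ^ 2 - 1 : ℝ[X]) * derivative q = C (2 * ((k : ℝ) + 1)) * (X * q) := by
    rw [hq, derivative_pow]
    simp only [Nat.add_sub_cancel, derivative_sub, derivative_one, derivative_X_pow,
      map_natCast, map_mul, map_add, map_ofNat, C_1, sub_zero]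
    push_cast
    ring
  have h2 := congrArg (fun P => derivative^[k + 2] P) h1
  rw [iterB k (derivative q), iter_deriv_C_mul, iterA (k + 1) q,
    ← Function.iterate_succ_apply derivative (k + 2) q,
    ← Function.iterate_succ_apply derivative (k + 1) q,
    ← Function.iterate_succ_apply derivative k q] at h2
  rw [← Function.iterate_succ_apply' derivative (k + 1) q,
    ← Function.iterate_succ_apply' derivative (k + 1 + 1) q]
  have h3 := congrArg (fun P : ℝ[X] => P.eval x) h2
  simp only [eval_mul, eval_add, eval_sub, eval_pow, eval_one, eval_X, eval_natCast,
    eval_C, eval_ofNat] at h3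
  push_cast at h3 ⊢
  linear_combination -h3

private lemma legP_abs_le {l : ℕ} (hl : 1 ≤ l) {x : ℝ} (hx0 : 0 ≤ x) (hx1 : x ≤ 1) :
    |legP l x| ≤ 1 := by
  set p : ℝ[X] := derivative^[l] ((X ^ 2 - 1 : ℝ[X]) ^ l) with hp
  have hN : (0 : ℝ) < (l : ℝ) * ((l : ℝ) + 1) := by
    have : (1 : ℝ) ≤ (l : ℝ) := by exact_mod_cast hl
    nlinarith
  set N : ℝ := (l : ℝ) * ((l : ℝ) + 1) with hNdef
  set F : ℝ → ℝ := fun y =>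
    (p.eval y) ^ 2 + (1 - y ^ 2) * ((derivative p).eval y) ^ 2 / N with hF
  have hFderiv : ∀ y : ℝ, HasDerivAt F (2 * y * ((derivative p).eval y) ^ 2 / N) y := by
    intro y
    have h1 : HasDerivAt (fun z : ℝ => (p.eval z) ^ 2)
        (2 * p.eval y * (derivative p).eval y) y := by
      have := (p.hasDerivAt y).pow 2
      simpa [Pi.pow_def, mul_comm, mul_assoc, mul_left_comm] using this
    have h2 : HasDerivAt (fun z : ℝ => (1 - z ^ 2) * ((derivative p).eval z) ^ 2 / N)
        (((-(2 * y)) * ((derivative p).eval y) ^ 2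
          + (1 - y ^ 2) * (2 * (derivative p).eval y * (derivative (derivative p)).eval y)) / N)
        y := by
      have ha : HasDerivAt (fun z : ℝ => 1 - z ^ 2) (-(2 * y)) y := by
        simpa using ((hasDerivAt_pow 2 y).const_sub 1)
      have hb : HasDerivAt (fun z : ℝ => ((derivative p).eval z) ^ 2)
          (2 * (derivative p).eval y * (derivative (derivative p)).eval y) y := by
        have := ((derivative p).hasDerivAt y).pow 2
        simpa [Pi.pow_def, mul_comm, mul_assoc, mul_left_comm] using this
      exact (ha.mul hb).div_const N
    have := h1.add h2
    refine this.congr_deriv (Eq.symm ?_)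
    have hode := legP_ODE hl y
    field_simp
    linear_combination (-(derivative p).eval y) * hode
  have hmono : MonotoneOn F (Set.Icc (0 : ℝ) 1) := by
    apply monotoneOn_of_deriv_nonneg (convex_Icc 0 1)
    · have hdiff : Differentiable ℝ F := fun y => (hFderiv y).differentiableAt
      exact hdiff.continuous.continuousOn
    · intro y hy
      exact (hFderiv y).differentiableAt.differentiableWithinAt
    · intro y hy
      rw [interior_Icc] at hy
      rw [(hFderiv y).deriv]
      have hy0 : 0 ≤ y := le_of_lt hy.1
      have : 0 ≤ 2 * y * ((derivative p).eval y) ^ 2 := by positivity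
      exact div_nonneg this hN.le
  have hF1 : F 1 = ((2 : ℝ) ^ l * Nat.factorial l) ^ 2 := by
    simp [hF, eval_one_iter l, ← hp]
    rw [hp, eval_one_iter l]
  have hkey : (p.eval x) ^ 2 ≤ ((2 : ℝ) ^ l * Nat.factorial l) ^ 2 := by
    have h1 : F x ≤ F 1 := hmono ⟨hx0, hx1⟩ ⟨zero_le_one, le_refl 1⟩ hx1
    have h2 : (p.eval x) ^ 2 ≤ F x := by
      have hnn : 0 ≤ (1 - x ^ 2) * ((derivative p).eval x) ^ 2 / N := by
        apply div_nonneg _ hN.le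
        apply mul_nonneg (by nlinarith) (sq_nonneg _)
      simp only [hF]
      linarith
    linarith [hF1 ▸ h1]
  have hfacpos : (0 : ℝ) < 2 ^ l * (Nat.factorial l : ℝ) := by positivity
  have habs : |p.eval x| ≤ 2 ^ l * (Nat.factorial l : ℝ) := by
    nlinarith [abs_nonneg (p.eval x), sq_abs (p.eval x)]
  rw [legP_eq_eval, abs_mul, ← hp]
  rw [abs_of_pos (by positivity : (0:ℝ) < 1 / (2 ^ l * (Nat.factorial l : ℝ)))]
  rw [div_mul_eq_mul_div, one_mul, div_le_one hfacpos]
  exact habs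

end PolyAux

private lemma legP_continuous (l : ℕ) : Continuous (legP l) := by
  have h : legP l = fun x => (1 / (2 ^ l * (Nat.factorial l : ℝ))) *
      (Polynomial.derivative^[l] ((Polynomial.X ^ 2 - 1 : Polynomial ℝ) ^ l)).eval x :=
    funext (legP_eq_eval l)
  rw [h]
  exact continuous_const.mul (Polynomial.continuous _)

private lemma pointwise_bounds (l n : ℕ) (hl : 1 ≤ l) {θ : ℝ} (h0 : 0 < θ)
    (h1 : θ ≤ Real.pi / 2) :
    1 - |legP l (Real.cos θ)| ≤ 1 - legP l (Real.cos θ) * Real.cos θ ^ (2 * n + l) ∧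
    0 ≤ 1 - legP l (Real.cos θ) * Real.cos θ ^ (2 * n + l) ∧
    1 - legP l (Real.cos θ) * Real.cos θ ^ (2 * n + l) ≤ 2 := by
  have hc0 : 0 ≤ Real.cos θ :=
    Real.cos_nonneg_of_mem_Icc ⟨by linarith [Real.pi_pos], h1⟩
  have hc1 := Real.cos_le_one θ
  have hP : |legP l (Real.cos θ)| ≤ 1 := legP_abs_le hl hc0 hc1
  have hpow0 : 0 ≤ Real.cos θ ^ (2 * n + l) := pow_nonneg hc0 _
  have hpow1 : Real.cos θ ^ (2 * n + l) ≤ 1 := pow_le_one₀ hc0 hc1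
  have h3 : legP l (Real.cos θ) * Real.cos θ ^ (2 * n + l) ≤ |legP l (Real.cos θ)| := by
    calc legP l (Real.cos θ) * Real.cos θ ^ (2 * n + l)
        ≤ |legP l (Real.cos θ)| * Real.cos θ ^ (2 * n + l) :=
          mul_le_mul_of_nonneg_right (le_abs_self _) hpow0
      _ ≤ |legP l (Real.cos θ)| * 1 :=
          mul_le_mul_of_nonneg_left hpow1 (abs_nonneg _)
      _ = |legP l (Real.cos θ)| := mul_one _
  have h4 : -1 ≤ legP l (Real.cos θ) * Real.cos θ ^ (2 * n + l) := by
    nlinarith [neg_abs_le (legP l (Real.cos θ)), abs_nonneg (legP l (Real.cos θ))]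
  exact ⟨by linarith, by linarith, by linarith⟩

private lemma contOn_rpow {e A B : ℝ} (hA : 0 < A) (hB : 0 < B) :
    ContinuousOn (fun θ : ℝ => θ ^ e) (Set.uIcc A B) := by
  apply ContinuousOn.rpow_const continuousOn_id
  intro x hx
  left
  rcases Set.mem_uIcc.mp hx with h | h
  · exact (lt_of_lt_of_le hA h.1).ne'
  · exact (lt_of_lt_of_le hB h.1).ne'

theorem lam3B_two_sided (s : ℝ) (hs0 : 0 < s) (hs1 : s < 1)
    (l : ℕ) (hl : 2 ≤ l) (n : ℕ) :
    (l : ℝ) ^ (2 * s) *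
        (∫ θ in (1:ℝ)..(Real.pi / 2),
          θ ^ (-2 * s - 1) * (1 - |legP l (Real.cos (θ / (l : ℝ)))|))
      ≤ lam3B s n l ∧
    lam3B s n l ≤
      (l : ℝ) ^ (2 * s) * ∫ θ in Set.Ioi (1/3 : ℝ), 2 * θ ^ (-2 * s - 1) := by
  have pi_pos := Real.pi_pos
  have pi_gt := Real.pi_gt_three
  have hl2 : (2 : ℝ) ≤ (l : ℝ) := by exact_mod_cast hl
  have hlpos : (0 : ℝ) < (l : ℝ) := by linarith
  have hl1 : 1 ≤ l := by omega
  set e : ℝ := -2 * s - 1 with he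
  have heneg : e < -1 := by rw [he]; linarith
  set g : ℝ → ℝ := fun θ => θ ^ e * (1 - legP l (Real.cos θ) * Real.cos θ ^ (2 * n + l))
    with hg
  set a : ℝ := 1 / ((l : ℝ) + 2) with ha
  have hapos : 0 < a := by positivity
  have haq : a ≤ 1 / 4 := by
    rw [ha]
    apply one_div_le_one_div_of_le (by norm_num) (by linarith)
  have hab : a ≤ π / 4 := haq.trans (by linarith)
  have hπ42 : π / 4 ≤ π / 2 := by linarith
  have glam : lam3B s n l = ∫ θ in a..(π / 4), g θ := by
    simp only [lam3B, hg, ha, he]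
  have hcont1 : Continuous (fun θ : ℝ => 1 - legP l (Real.cos θ) * Real.cos θ ^ (2 * n + l)) :=
    continuous_const.sub (((legP_continuous l).comp Real.continuous_cos).mul
      (Real.continuous_cos.pow _))
  have hgcont : ∀ {A B : ℝ}, 0 < A → 0 < B → ContinuousOn g (Set.uIcc A B) := by
    intro A B hA hB
    exact (contOn_rpow hA hB).mul hcont1.continuousOn
  -- pointwise bounds on positive θ up to π/2
  have hgb : ∀ {θ : ℝ}, 0 < θ → θ ≤ π / 2 →
      0 ≤ g θ ∧ g θ ≤ 2 * θ ^ e ∧ θ ^ e * (1 - |legP l (Real.cos θ)|) ≤ g θ := by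
    intro θ h0 h1
    obtain ⟨hA, hB, hC⟩ := pointwise_bounds l n hl1 h0 h1
    have hre : 0 ≤ θ ^ e := Real.rpow_nonneg h0.le e
    refine ⟨mul_nonneg hre hB, ?_, mul_le_mul_of_nonneg_left hA hre⟩
    calc θ ^ e * (1 - legP l (Real.cos θ) * Real.cos θ ^ (2 * n + l))
        ≤ θ ^ e * 2 := mul_le_mul_of_nonneg_left hC hre
      _ = 2 * θ ^ e := mul_comm _ _
  -- integrability of g on [a, π/4]
  have int_g : IntervalIntegrable g volume a (π / 4) :=
    (hgcont hapos (by positivity)).intervalIntegrable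
  constructor
  · -- LOWER BOUND
    set b1 : ℝ := 1 / (l : ℝ) with hb1
    set b2 : ℝ := π / (2 * (l : ℝ)) with hb2
    have hb1pos : 0 < b1 := by positivity
    have hb2pos : 0 < b2 := by positivity
    have hb1b2 : b1 ≤ b2 := by
      rw [hb1, hb2, div_le_div_iff₀ hlpos (by positivity)]
      nlinarith
    have hb2le : b2 ≤ π / 4 := by
      rw [hb2, div_le_div_iff₀ (by positivity) (by norm_num)]
      nlinarith
    have hab1 : a ≤ b1 := by
      rw [ha, hb1]
      exact one_div_le_one_div_of_le hlpos (by linarith)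
    set f : ℝ → ℝ := fun u => u ^ e * (1 - |legP l (Real.cos u)|) with hf
    have hL1 : (l : ℝ) ^ (2 * s) *
        (∫ θ in (1:ℝ)..(π / 2), θ ^ e * (1 - |legP l (Real.cos (θ / (l : ℝ)))|))
        = ∫ u in b1..b2, f u := by
      have hcg : Set.EqOn (fun θ : ℝ => θ ^ e * (1 - |legP l (Real.cos (θ / (l : ℝ)))|))
          (fun θ : ℝ => (l : ℝ) ^ e * f (θ / (l : ℝ))) (Set.uIcc (1:ℝ) (π / 2)) := by
        intro θ hθ
        have hθpos : (0 : ℝ) < θ := by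
          rcases Set.mem_uIcc.mp hθ with h | h
          · linarith [h.1]
          · linarith [h.1]
        simp only [hf]
        rw [Real.div_rpow hθpos.le hlpos.le]
        have hlr : (l : ℝ) ^ e ≠ 0 := ne_of_gt (Real.rpow_pos_of_pos hlpos e)
        field_simp
      rw [intervalIntegral.integral_congr hcg, intervalIntegral.integral_const_mul,
        intervalIntegral.integral_comp_div (c := (l : ℝ)) f hlpos.ne', smul_eq_mul,
        div_div]
      rw [show (1:ℝ)/(l:ℝ) = b1 from rfl, show π/(2*(l:ℝ)) = b2 from rfl]
      have h2se : (l:ℝ) ^ (2*s) * (l:ℝ) ^ e * (l:ℝ) = 1 := by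
        rw [← Real.rpow_add hlpos]
        have hh : 2*s + e = -1 := by rw [he]; ring
        rw [hh, Real.rpow_neg_one]
        field_simp
      linear_combination (∫ x in b1..b2, f x) * h2se
    rw [hL1, glam]
    have hptw : ∀ θ ∈ Set.Icc b1 b2, f θ ≤ g θ := by
      intro θ hθ
      have h0 : 0 < θ := lt_of_lt_of_le hb1pos hθ.1
      have h1 : θ ≤ π / 2 := le_trans hθ.2 (le_trans hb2le hπ42)
      exact (hgb h0 h1).2.2
    have int_f : IntervalIntegrable f volume b1 b2 := by
      apply ContinuousOn.intervalIntegrable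
      exact (contOn_rpow hb1pos hb2pos).mul
        (continuous_const.sub ((legP_continuous l).comp Real.continuous_cos).abs).continuousOn
    have int_g2 : IntervalIntegrable g volume b1 b2 :=
      (hgcont hb1pos hb2pos).intervalIntegrable
    have step1 : (∫ u in b1..b2, f u) ≤ ∫ u in b1..b2, g u :=
      intervalIntegral.integral_mono_on hb1b2 int_f int_g2 hptw
    have step2 : (∫ u in b1..b2, g u) ≤ ∫ θ in a..(π / 4), g θ := by
      apply intervalIntegral.integral_mono_interval hab1 hb1b2 hb2le _ int_g
      apply (ae_restrict_iff' measurableSet_Ioc).mpr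
      apply Filter.Eventually.of_forall
      intro θ hθ
      exact (hgb (hapos.trans hθ.1) (le_trans hθ.2 hπ42)).1
    linarith
  · -- UPPER BOUND
    rw [glam]
    have int2 : IntervalIntegrable (fun θ : ℝ => 2 * θ ^ e) volume a (π / 4) := by
      apply ContinuousOn.intervalIntegrable
      exact continuousOn_const.mul (contOn_rpow hapos (by positivity))
    have step1 : (∫ θ in a..(π / 4), g θ) ≤ ∫ θ in a..(π / 4), 2 * θ ^ e := by
      apply intervalIntegral.integral_mono_on hab int_g int2
      intro θ hθ
      exact (hgb (lt_of_lt_of_le hapos hθ.1) (le_trans hθ.2 hπ42)).2.1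
    have hTc : ∀ {c : ℝ}, 0 < c → (∫ θ in Set.Ioi c, 2 * θ ^ e) = c ^ (-(2 * s)) / s := by
      intro c hc
      rw [MeasureTheory.integral_const_mul, integral_Ioi_rpow_of_lt heneg hc]
      have hh : e + 1 = -(2 * s) := by rw [he]; ring
      rw [hh]
      field_simp
    have step2 : (∫ θ in a..(π / 4), 2 * θ ^ e) ≤ ∫ θ in Set.Ioi a, 2 * θ ^ e := by
      rw [intervalIntegral.integral_of_le hab]
      apply setIntegral_mono_set ((integrableOn_Ioi_rpow_of_lt heneg hapos).const_mul 2)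
      · apply (ae_restrict_iff' measurableSet_Ioi).mpr
        apply Filter.Eventually.of_forall
        intro θ hθ
        have hθ0 : (0 : ℝ) < θ := hapos.trans hθ
        simpa using mul_nonneg (by norm_num : (0:ℝ) ≤ 2) (Real.rpow_nonneg hθ0.le e)
      · exact (Set.Ioc_subset_Ioi_self).eventuallyLE
    have hfin : a ^ (-(2 * s)) / s ≤ (l : ℝ) ^ (2 * s) * ((1 / 3 : ℝ) ^ (-(2 * s)) / s) := by
      have h1 : a ^ (-(2 * s)) = ((l : ℝ) + 2) ^ (2 * s) := by
        rw [ha, one_div, Real.inv_rpow (by linarith), Real.rpow_neg (by linarith), inv_inv]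
      have h2 : ((1 : ℝ) / 3) ^ (-(2 * s)) = (3 : ℝ) ^ (2 * s) := by
        rw [one_div, Real.inv_rpow (by norm_num), Real.rpow_neg (by norm_num), inv_inv]
      rw [h1, h2, ← mul_div_assoc]
      have h3 : ((l : ℝ) + 2) ^ (2 * s) ≤ (3 * (l : ℝ)) ^ (2 * s) :=
        Real.rpow_le_rpow (by linarith) (by linarith) (by linarith)
      rw [Real.mul_rpow (by norm_num) hlpos.le] at h3
      gcongr
      exact h3.trans_eq (mul_comm _ _)
    rw [hTc (by norm_num : (0:ℝ) < (1/3 : ℝ))]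
    have heval := hTc hapos
    linarith
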